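/- Let (X, μ) be a probability space, let λ, L > 0, and let a : ℝ^d × X → ℝ^d be measurable, with p ↦ a(p,x) strongly monotone with constant λ (i.e. (a(p,x)−a(q,x))·(p−q) ≥ λ|p−q|²) and L-Lipschitz, uniformly in x. Suppose that for each p ∈ ℝ^d there is w_p ∈ L²(X; ℝ^d) with ∫_X w_p dμ = 0 and such that for all p, q ∈ ℝ^d, ∫_X (a(w_p(x)+p, x) − a(w_q(x)+q, x)) · (w_p(x) − w_q(x)) dμ(x) = 0. Define ā(p) = ∫_X a(w_p(x)+p, x) dμ(x). Then for all p, q: (ā(p)−ā(q))·(p−q) ≥ λ·(|p−q|² + ‖w_p − w_q‖²_{L²(X)}). -/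

import Mathlib

open MeasureTheory
open scoped InnerProductSpace


private lemma aux_integrable_inner {X : Type*} [MeasurableSpace X] {μ : Measure X}
    {E : Type*} [NormedAddCommGroup E] [InnerProductSpace ℝ E]
    {f g : X → E} (hf : MemLp f 2 μ) (hg : MemLp g 2 μ) :
    Integrable (fun x => ⟪f x, g x⟫_ℝ) μ := by
  have h := L2.integrable_inner (𝕜 := ℝ) (hf.toLp f) (hg.toLp g)
  refine h.congr ?_
  filter_upwards [hf.coeFn_toLp, hg.coeFn_toLp] with x h1 h2
  rw [h1, h2]

theorem stmt_11 (d : ℕ) (hd : 1 ≤ d)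
    {X : Type*} [MeasurableSpace X] (μ : Measure X) [IsProbabilityMeasure μ]
    (lam L : ℝ) (hlam : 0 < lam) (hL : 0 < L)
    (a : EuclideanSpace ℝ (Fin d) → X → EuclideanSpace ℝ (Fin d))
    (hmeas : ∀ p, Measurable (a p))
    (hmono : ∀ x p q, lam * ‖p - q‖ ^ 2 ≤ ⟪a p x - a q x, p - q⟫_ℝ)
    (hlip : ∀ x p q, ‖a p x - a q x‖ ≤ L * ‖p - q‖)
    (w : EuclideanSpace ℝ (Fin d) → X → EuclideanSpace ℝ (Fin d))
    (hw2 : ∀ p, MemLp (w p) 2 μ)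
    (hwmean : ∀ p, ∫ x, w p x ∂μ = 0)
    (hint : ∀ p, Integrable (fun x => a (w p x + p) x) μ)
    (horth : ∀ p q,
      ∫ x, ⟪a (w p x + p) x - a (w q x + q) x, w p x - w q x⟫_ℝ ∂μ = 0)
    (abar : EuclideanSpace ℝ (Fin d) → EuclideanSpace ℝ (Fin d))
    (habar : ∀ p, abar p = ∫ x, a (w p x + p) x ∂μ) :
    ∀ p q, lam * (‖p - q‖ ^ 2 + ∫ x, ‖w p x - w q x‖ ^ 2 ∂μ)
      ≤ ⟪abar p - abar q, p - q⟫_ℝ := by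
  intro p q
  set c : EuclideanSpace ℝ (Fin d) := p - q with hc
  set u : X → EuclideanSpace ℝ (Fin d) := fun x => w p x - w q x with hu
  set D : X → EuclideanSpace ℝ (Fin d) :=
    fun x => a (w p x + p) x - a (w q x + q) x with hD
  have hu2 : MemLp u 2 μ := (hw2 p).sub (hw2 q)
  have hDint : Integrable D μ := (hint p).sub (hint q)
  have hDmeas : AEStronglyMeasurable D μ := hDint.aestronglyMeasurable
  -- vdiff = u + c
  have hvd : ∀ x, (w p x + p) - (w q x + q) = u x + c := by
    intro x; simp [hu, hc]; abel
  have hv2 : MemLp (fun x => u x + c) 2 μ := hu2.add (memLp_const c)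
  have hD2 : MemLp D 2 μ := by
    refine MemLp.of_le_mul (c := L) hv2 hDmeas (ae_of_all _ fun x => ?_)
    have := hlip x (w p x + p) (w q x + q)
    rw [hvd x] at this
    simpa [hD] using this
  -- integrability of the scalar functions involved
  have hnormsq : Integrable (fun x => ‖u x + c‖ ^ 2) μ := by
    have := aux_integrable_inner hv2 hv2
    refine this.congr (ae_of_all _ fun x => ?_)
    simp only []
    rw [real_inner_self_eq_norm_sq]
  have husq : Integrable (fun x => ‖u x‖ ^ 2) μ := by
    have := aux_integrable_inner hu2 hu2
    refine this.congr (ae_of_all _ fun x => ?_)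
    simp only []
    rw [real_inner_self_eq_norm_sq]
  have hinnerDu : Integrable (fun x => ⟪D x, u x⟫_ℝ) μ := aux_integrable_inner hD2 hu2
  have hinnerDc : Integrable (fun x => ⟪D x, c⟫_ℝ) μ := by
    refine hDint.norm.const_mul ‖c‖ |>.mono'
      (hDmeas.inner aestronglyMeasurable_const) (ae_of_all _ fun x => ?_)
    calc |⟪D x, c⟫_ℝ| ≤ ‖D x‖ * ‖c‖ := abs_real_inner_le_norm _ _
      _ = ‖c‖ * ‖D x‖ := mul_comm _ _
  -- pointwise monotonicity, integrated
  have key : lam * ∫ x, ‖u x + c‖ ^ 2 ∂μ ≤ ∫ x, ⟪D x, u x + c⟫_ℝ ∂μ := by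
    rw [← integral_const_mul]
    refine integral_mono (hnormsq.const_mul lam) ?_ fun x => ?_
    · have : (fun x => ⟪D x, u x + c⟫_ℝ)
          = fun x => ⟪D x, u x⟫_ℝ + ⟪D x, c⟫_ℝ := by
        funext x; rw [inner_add_right]
      rw [this]
      exact hinnerDu.add hinnerDc
    · have := hmono x (w p x + p) (w q x + q)
      rw [hvd x] at this
      simpa [hD] using this
  -- compute the left integral
  have huint : Integrable u μ := hu2.integrable (by norm_num)
  have humean : ∫ x, u x ∂μ = 0 := by
    rw [hu]
    simp only
    rw [integral_sub ((hw2 p).integrable (by norm_num))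
      ((hw2 q).integrable (by norm_num)), hwmean p, hwmean q, sub_zero]
  have hinneruc : Integrable (fun x => ⟪u x, c⟫_ℝ) μ := by
    refine huint.norm.const_mul ‖c‖ |>.mono'
      (huint.aestronglyMeasurable.inner aestronglyMeasurable_const)
      (ae_of_all _ fun x => ?_)
    calc |⟪u x, c⟫_ℝ| ≤ ‖u x‖ * ‖c‖ := abs_real_inner_le_norm _ _
      _ = ‖c‖ * ‖u x‖ := mul_comm _ _
  have hleft : ∫ x, ‖u x + c‖ ^ 2 ∂μ = ‖c‖ ^ 2 + ∫ x, ‖u x‖ ^ 2 ∂μ := by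
    have hexp : ∀ x, ‖u x + c‖ ^ 2 = ‖u x‖ ^ 2 + 2 * ⟪u x, c⟫_ℝ + ‖c‖ ^ 2 :=
      fun x => norm_add_sq_real (u x) c
    calc ∫ x, ‖u x + c‖ ^ 2 ∂μ
        = ∫ x, (‖u x‖ ^ 2 + 2 * ⟪u x, c⟫_ℝ + ‖c‖ ^ 2) ∂μ := by
          exact integral_congr_ae (ae_of_all _ hexp)
      _ = (∫ x, ‖u x‖ ^ 2 ∂μ) + (∫ x, 2 * ⟪u x, c⟫_ℝ ∂μ) + ‖c‖ ^ 2 := by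
          have A : ∫ x, (‖u x‖ ^ 2 + 2 * ⟪u x, c⟫_ℝ) + ‖c‖ ^ 2 ∂μ
              = (∫ x, (‖u x‖ ^ 2 + 2 * ⟪u x, c⟫_ℝ) ∂μ) + ∫ x, (‖c‖ ^ 2 : ℝ) ∂μ :=
            integral_add (husq.add (hinneruc.const_mul 2)) (integrable_const _)
          have B : ∫ x, (‖u x‖ ^ 2 + 2 * ⟪u x, c⟫_ℝ) ∂μ
              = (∫ x, ‖u x‖ ^ 2 ∂μ) + ∫ x, 2 * ⟪u x, c⟫_ℝ ∂μ :=
            integral_add husq (hinneruc.const_mul 2)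
          rw [A, B, integral_const]
          simp
      _ = ‖c‖ ^ 2 + ∫ x, ‖u x‖ ^ 2 ∂μ := by
          have : ∫ x, ⟪u x, c⟫_ℝ ∂μ = ⟪∫ x, u x ∂μ, c⟫_ℝ := by
            have := integral_inner (𝕜 := ℝ) huint c
            calc ∫ x, ⟪u x, c⟫_ℝ ∂μ = ∫ x, ⟪c, u x⟫_ℝ ∂μ := by
                  simp_rw [real_inner_comm]
              _ = ⟪c, ∫ x, u x ∂μ⟫_ℝ := this
              _ = ⟪∫ x, u x ∂μ, c⟫_ℝ := real_inner_comm _ _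
          rw [integral_const_mul, this, humean, inner_zero_left]
          ring
  -- compute the right integral
  have hright : ∫ x, ⟪D x, u x + c⟫_ℝ ∂μ = ⟪abar p - abar q, c⟫_ℝ := by
    have hsplit : ∫ x, ⟪D x, u x + c⟫_ℝ ∂μ
        = (∫ x, ⟪D x, u x⟫_ℝ ∂μ) + ∫ x, ⟪D x, c⟫_ℝ ∂μ := by
      rw [← integral_add hinnerDu hinnerDc]
      exact integral_congr_ae (ae_of_all _ fun x => by simp [inner_add_right])
    have h1 : ∫ x, ⟪D x, u x⟫_ℝ ∂μ = 0 := horth p q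
    have h2 : ∫ x, ⟪D x, c⟫_ℝ ∂μ = ⟪abar p - abar q, c⟫_ℝ := by
      calc ∫ x, ⟪D x, c⟫_ℝ ∂μ = ∫ x, ⟪c, D x⟫_ℝ ∂μ := by
            simp_rw [real_inner_comm]
        _ = ⟪c, ∫ x, D x ∂μ⟫_ℝ := integral_inner (𝕜 := ℝ) hDint c
        _ = ⟪∫ x, D x ∂μ, c⟫_ℝ := real_inner_comm _ _
        _ = ⟪abar p - abar q, c⟫_ℝ := by
            rw [hD, integral_sub (hint p) (hint q), habar p, habar q]
    rw [hsplit, h1, h2, zero_add]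
  calc lam * (‖p - q‖ ^ 2 + ∫ x, ‖w p x - w q x‖ ^ 2 ∂μ)
      = lam * ∫ x, ‖u x + c‖ ^ 2 ∂μ := by rw [hleft]
    _ ≤ ∫ x, ⟪D x, u x + c⟫_ℝ ∂μ := key
    _ = ⟪abar p - abar q, p - q⟫_ℝ := hright
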